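/- Let Γ be a uniform ranked poset, R = R(Γ), x ∈ Γ′ and 0 ≤ k < rk(x). Suppose p = Σ_{y ∈ S_x(k+1)} α_y r_y ∈ W with coefficients α_y ∈ F satisfies r_b·p = 0 in R for every b ∈ S_x(k). Then all the coefficients α_y are equal; that is, p is a scalar multiple of r_x(k+1). -/

import Mathlib

set_option linter.unusedSectionVars false
set_option linter.unusedVariables false

open scoped Classical

variable {Γ : Type*} [PartialOrder Γ] [OrderBot Γ] [Fintype Γ]

/-- `rk` is a rank function for the finite poset `Γ` (with least element `⊥`):
the bottom has rank `0` and ranks increase by one along covering relations.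
Equivalently, all maximal chains in `[⊥, x]` have the same length `rk x`. -/
def IsRanked (rk : Γ → ℕ) : Prop :=
  rk ⊥ = 0 ∧ ∀ a b : Γ, a ⋖ b → rk b = rk a + 1

/-- `rankSet rk x n` is the set `S_x(n) = {y ≤ x : rk x - rk y = n}`. -/
def rankSet (rk : Γ → ℕ) (x : Γ) (n : ℕ) : Set Γ := {y | y ≤ x ∧ rk y + n = rk x}

/-- `Γ` is uniform: for each `a`, the equivalence relation on `S_a(1)` generated by
`b ∼ c` whenever `S_b(1) ∩ S_c(1) ≠ ∅` has at most one equivalence class. -/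
def Uniform (rk : Γ → ℕ) : Prop :=
  ∀ a b c : Γ, b ∈ rankSet rk a 1 → c ∈ rankSet rk a 1 →
    Relation.EqvGen
      (fun u v => u ∈ rankSet rk a 1 ∧ v ∈ rankSet rk a 1 ∧
        (rankSet rk u 1 ∩ rankSet rk v 1).Nonempty)
      b c

/-- `Γ' = Γ \ {⊥}`, indexing the generators `r_x`. -/
abbrev Vert (Γ : Type*) [PartialOrder Γ] [OrderBot Γ] := {x : Γ // x ≠ (⊥ : Γ)}

variable (F : Type*) [Field F]

/-- The generator `r_x` of the tensor algebra `T(W)` on the vector space `W` with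
basis `{r_x : x ∈ Γ'}`, realized as the free algebra on `Γ'`. -/
noncomputable def gen (x : Vert Γ) : FreeAlgebra F (Vert Γ) := FreeAlgebra.ι F x

/-- `r_x(n) = Σ_{y ∈ S_x(n)} r_y ∈ W` (which is `0` for `n ≥ rk x`). -/
noncomputable def rxn (rk : Γ → ℕ) (x : Γ) (n : ℕ) : FreeAlgebra F (Vert Γ) :=
  ∑ y ∈ Finset.univ.filter (fun y : Vert Γ => y.1 ∈ rankSet rk x n), gen F y

/-- The quadratic relations spanning `I_2`: `r_x ⊗ r_y` for `y ∉ S_x(1)`, and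
`r_x ⊗ r_x(1)`, for `x, y ∈ Γ'`. -/
inductive GRel (F : Type*) [Field F] {Γ : Type*} [PartialOrder Γ] [OrderBot Γ]
    [Fintype Γ] (rk : Γ → ℕ) :
    FreeAlgebra F (Vert Γ) → FreeAlgebra F (Vert Γ) → Prop
  | mono (x y : Vert Γ) (h : y.1 ∉ rankSet rk x.1 1) : GRel F rk (gen F x * gen F y) 0
  | adj (x : Vert Γ) : GRel F rk (gen F x * rxn F rk x.1 1) 0

/-- The quadratic algebra `R(Γ) = T(W)/I`, where `I` is the two-sided ideal
generated by `I_2`. -/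
abbrev RGamma (rk : Γ → ℕ) := RingQuot (GRel F rk)

/-- The image of `r_x` in `R(Γ)`. -/
noncomputable def rbar (rk : Γ → ℕ) (x : Vert Γ) : RGamma F rk :=
  RingQuot.mkAlgHom F (GRel F rk) (gen F x)

/-- The image of `r_x(n)` in `R(Γ)`. -/
noncomputable def rxnbar (rk : Γ → ℕ) (x : Γ) (n : ℕ) : RGamma F rk :=
  RingQuot.mkAlgHom F (GRel F rk) (rxn F rk x n)

/-- The right ideal `r_x R = {r_x · s : s ∈ R}`, as an `F`-submodule of `R(Γ)`. -/
noncomputable def rIdeal (rk : Γ → ℕ) (x : Vert Γ) : Submodule F (RGamma F rk) :=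
  LinearMap.range (LinearMap.mulLeft F (rbar F rk x))

/-- `H_x(n) = Σ_{y ∈ Γ', y ∉ S_x(n)} r_y R`. -/
noncomputable def Hsub (rk : Γ → ℕ) (x : Γ) (n : ℕ) : Submodule F (RGamma F rk) :=
  ⨆ (y : Vert Γ) (_ : y.1 ∉ rankSet rk x n), rIdeal F rk y

/-! ### Auxiliary lemmas -/

section AuxOrder

variable {rk : Γ → ℕ}

private lemma rk_lt_of_lt (hrk : IsRanked rk) {a b : Γ} (h : a < b) : rk a < rk b := by
  letI : LocallyFiniteOrder Γ := Fintype.toLocallyFiniteOrder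
  have h' := transGen_covBy_of_lt h
  clear h
  induction h' with
  | single hc => rw [hrk.2 _ _ hc]; omega
  | tail _ hc ih => rw [hrk.2 _ _ hc]; omega

private lemma one_le_rk (hrk : IsRanked rk) {a : Γ} (ha : a ≠ ⊥) : 1 ≤ rk a := by
  have h := rk_lt_of_lt hrk (Ne.bot_lt ha)
  rw [hrk.1] at h
  omega

private lemma ne_bot_of_one_le_rk (hrk : IsRanked rk) {a : Γ} (ha : 1 ≤ rk a) : a ≠ ⊥ := by
  intro h
  rw [h, hrk.1] at ha
  omega

private lemma rankSet_one_subset {a b : Γ} {n : ℕ} (hb : b ∈ rankSet rk a n) :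
    rankSet rk b 1 ⊆ rankSet rk a (n + 1) := by
  intro u hu
  exact ⟨hu.1.trans hb.1, by have h1 := hu.2; have h2 := hb.2; omega⟩

private lemma exists_rankSet_one (hrk : IsRanked rk) {b : Γ} (hb : b ≠ ⊥) :
    ∃ u, u ∈ rankSet rk b 1 := by
  letI : LocallyFiniteOrder Γ := Fintype.toLocallyFiniteOrder
  obtain ⟨c, -, hc⟩ := exists_le_covBy_of_lt (Ne.bot_lt hb)
  exact ⟨c, hc.le, (hrk.2 _ _ hc).symm⟩

private lemma exists_cover_up (hrk : IsRanked rk) {a u : Γ} {n : ℕ}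
    (h : u ∈ rankSet rk a (n + 1)) : ∃ b, b ∈ rankSet rk a n ∧ u ∈ rankSet rk b 1 := by
  letI : LocallyFiniteOrder Γ := Fintype.toLocallyFiniteOrder
  have hlt : u < a := lt_of_le_of_ne h.1 (by rintro rfl; have := h.2; omega)
  obtain ⟨b, hub, hba⟩ := exists_covBy_le_of_lt hlt
  have hr := hrk.2 _ _ hub
  exact ⟨b, ⟨hba, by have := h.2; omega⟩, ⟨hub.le, by omega⟩⟩

/-- Two elements `u, v` are related if they lie below a common element of `S_a(k)`. -/
private def chainRel (rk : Γ → ℕ) (a : Γ) (k : ℕ) (u v : Γ) : Prop :=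
  ∃ b, b ∈ rankSet rk a k ∧ u ∈ rankSet rk b 1 ∧ v ∈ rankSet rk b 1

private lemma eqvGen_within (hrk : IsRanked rk) {a d : Γ} {k : ℕ}
    (hd : d ∈ rankSet rk a k) (h2 : k + 2 ≤ rk a) {b c : Γ}
    (h : Relation.EqvGen
      (fun u v => u ∈ rankSet rk d 1 ∧ v ∈ rankSet rk d 1 ∧
        (rankSet rk u 1 ∩ rankSet rk v 1).Nonempty) b c) :
    b = c ∨ (b ∈ rankSet rk d 1 ∧ c ∈ rankSet rk d 1 ∧
      ∀ u ∈ rankSet rk b 1, ∀ v ∈ rankSet rk c 1,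
        Relation.EqvGen (chainRel rk a (k + 1)) u v) := by
  induction h with
  | rel b c hbc =>
    obtain ⟨hb, hc, w, hw⟩ := hbc
    right
    have hbA : b ∈ rankSet rk a (k + 1) := rankSet_one_subset hd hb
    have hcA : c ∈ rankSet rk a (k + 1) := rankSet_one_subset hd hc
    refine ⟨hb, hc, fun u hu v hv => ?_⟩
    exact Relation.EqvGen.trans _ _ _
      (Relation.EqvGen.rel _ _ ⟨b, hbA, hu, hw.1⟩)
      (Relation.EqvGen.rel _ _ ⟨c, hcA, hw.2, hv⟩)
  | refl b => exact Or.inl rfl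
  | symm b c _ ih =>
    rcases ih with rfl | ⟨h1, h2', H⟩
    · exact Or.inl rfl
    · exact Or.inr ⟨h2', h1, fun u hu v hv => Relation.EqvGen.symm _ _ (H v hv u hu)⟩
  | trans b m c _ _ ih1 ih2 =>
    rcases ih1 with rfl | ⟨hb, hm, H1⟩
    · exact ih2
    rcases ih2 with rfl | ⟨hm', hc, H2⟩
    · exact Or.inr ⟨hb, hm, H1⟩
    right
    refine ⟨hb, hc, fun u hu v hv => ?_⟩
    have hmA : m ∈ rankSet rk a (k + 1) := rankSet_one_subset hd hm'
    have hmne : m ≠ ⊥ := ne_bot_of_one_le_rk hrk (by have := hmA.2; omega)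
    obtain ⟨w, hw⟩ := exists_rankSet_one hrk hmne
    exact Relation.EqvGen.trans _ _ _ (H1 u hu w hw) (H2 w hw v hv)

private lemma eqvGen_chainRel (hrk : IsRanked rk) (hU : Uniform rk) :
    ∀ (k : ℕ) (a u v : Γ), u ∈ rankSet rk a (k + 1) → v ∈ rankSet rk a (k + 1) →
      Relation.EqvGen (chainRel rk a k) u v := by
  intro k
  induction k with
  | zero =>
    intro a u v hu hv
    exact Relation.EqvGen.rel _ _ ⟨a, ⟨le_rfl, rfl⟩, hu, hv⟩
  | succ k ih =>
    intro a u v hu hv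
    have h2 : k + 2 ≤ rk a := by have := hu.2; omega
    obtain ⟨b, hb, hub⟩ := exists_cover_up hrk hu
    obtain ⟨c, hc, hvc⟩ := exists_cover_up hrk hv
    have main : ∀ b c : Γ, Relation.EqvGen (chainRel rk a k) b c →
        b = c ∨ (b ∈ rankSet rk a (k + 1) ∧ c ∈ rankSet rk a (k + 1) ∧
          ∀ u ∈ rankSet rk b 1, ∀ v ∈ rankSet rk c 1,
            Relation.EqvGen (chainRel rk a (k + 1)) u v) := by
      intro b c h
      induction h with
      | rel b c hbc =>
        obtain ⟨d, hd, hbd, hcd⟩ := hbc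
        right
        have hbA : b ∈ rankSet rk a (k + 1) := rankSet_one_subset hd hbd
        have hcA : c ∈ rankSet rk a (k + 1) := rankSet_one_subset hd hcd
        refine ⟨hbA, hcA, fun u hu' v hv' => ?_⟩
        rcases eqvGen_within hrk hd h2 (hU d b c hbd hcd) with rfl | ⟨-, -, H⟩
        · exact Relation.EqvGen.rel _ _ ⟨b, hbA, hu', hv'⟩
        · exact H u hu' v hv'
      | refl b => exact Or.inl rfl
      | symm b c _ ih' =>
        rcases ih' with rfl | ⟨h1, h2', H⟩
        · exact Or.inl rfl
        · exact Or.inr ⟨h2', h1, fun u hu' v hv' => Relation.EqvGen.symm _ _ (H v hv' u hu')⟩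
      | trans b m c _ _ ih1 ih2 =>
        rcases ih1 with rfl | ⟨hb', hm, H1⟩
        · exact ih2
        rcases ih2 with rfl | ⟨hm', hc', H2⟩
        · exact Or.inr ⟨hb', hm, H1⟩
        right
        refine ⟨hb', hc', fun u hu' v hv' => ?_⟩
        have hmne : m ≠ ⊥ := ne_bot_of_one_le_rk hrk (by have := hm'.2; omega)
        obtain ⟨w, hw⟩ := exists_rankSet_one hrk hmne
        exact Relation.EqvGen.trans _ _ _ (H1 u hu' w hw) (H2 w hw v hv')
    rcases main b c (ih a b c hb hc) with rfl | ⟨-, -, H⟩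
    · exact Relation.EqvGen.rel _ _ ⟨b, hb, hub, hvc⟩
    · exact H u hub v hvc

end AuxOrder

/-! ### The matrix representation used to extract coefficient identities -/

/-- An auxiliary algebra map target: `b ↦ E₀₁`, `y ↦ E₁₂`, `z ↦ -E₁₂`, all else `0`. -/
private noncomputable def Mmat {Γ : Type*} [PartialOrder Γ] [OrderBot Γ]
    (F : Type*) [Field F] (b y z : Vert Γ) (w : Vert Γ) : Matrix (Fin 3) (Fin 3) F :=
  if w = b then Matrix.single 0 1 1
  else if w = y then Matrix.single 1 2 1
  else if w = z then Matrix.single 1 2 (-1)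
  else 0

private lemma E12_mul_M {b y z w : Vert Γ} (c : F) :
    Matrix.single 1 2 c * Mmat F b y z w = 0 := by
  have h20 : (2 : Fin 3) ≠ 0 := by decide
  have h21 : (2 : Fin 3) ≠ 1 := by decide
  unfold Mmat
  split_ifs
  · exact Matrix.single_mul_single_of_ne (h := h20) ..
  · exact Matrix.single_mul_single_of_ne (h := h21) ..
  · exact Matrix.single_mul_single_of_ne (h := h21) ..
  · exact mul_zero _

private lemma coeff_eq_on_cover (rk : Γ → ℕ) (α : Vert Γ → F)
    (b y z : Vert Γ) (hy : y.1 ∈ rankSet rk b.1 1) (hz : z.1 ∈ rankSet rk b.1 1)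
    (x : Vert Γ) (k : ℕ) (hb : b.1 ∈ rankSet rk x.1 k)
    (hann : rbar F rk b *
      RingQuot.mkAlgHom F (GRel F rk)
        (∑ w ∈ Finset.univ.filter (fun w : Vert Γ => w.1 ∈ rankSet rk x.1 (k + 1)),
          α w • gen F w) = 0) :
    α y = α z := by
  by_cases hyz : y = z
  · rw [hyz]
  have h10 : (1 : Fin 3) ≠ 0 := by decide
  have hyb : y ≠ b := by
    intro h; rw [h] at hy; have := hy.2; omega
  have hzb : z ≠ b := by
    intro h; rw [h] at hz; have := hz.2; omega
  have hzy : z ≠ y := fun h => hyz h.symm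
  have Mb : Mmat F b y z b = Matrix.single 0 1 1 := by simp [Mmat]
  have My : Mmat F b y z y = Matrix.single 1 2 1 := by simp [Mmat, hyb]
  have Mz : Mmat F b y z z = Matrix.single 1 2 (-1) := by simp [Mmat, hzb, hzy]
  have M0 : ∀ w : Vert Γ, w ≠ b → w ≠ y → w ≠ z → Mmat F b y z w = 0 := by
    intro w h1 h2 h3; simp [Mmat, h1, h2, h3]
  -- the defining relations are sent to zero
  have hrel : ∀ ⦃u v : FreeAlgebra F (Vert Γ)⦄, GRel F rk u v →
      (FreeAlgebra.lift F (Mmat F b y z)) u = (FreeAlgebra.lift F (Mmat F b y z)) v := by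
    intro u v h
    cases h with
    | mono p q hq =>
      simp only [gen, map_mul, FreeAlgebra.lift_ι_apply, map_zero]
      by_cases hp : p = b
      · have hqy : q ≠ y := by rintro rfl; rw [hp] at hq; exact hq hy
        have hqz : q ≠ z := by rintro rfl; rw [hp] at hq; exact hq hz
        rw [hp, Mb]
        by_cases hqb : q = b
        · rw [hqb, Mb]
          exact Matrix.single_mul_single_of_ne (h := h10) ..
        · rw [M0 q hqb hqy hqz, mul_zero]
      · by_cases hpy : p = y
        · rw [hpy, My]; exact E12_mul_M F 1
        by_cases hpz : p = z
        · rw [hpz, Mz]; exact E12_mul_M F (-1)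
        · rw [M0 p hp hpy hpz, zero_mul]
    | adj p =>
      simp only [gen, rxn, map_mul, map_sum, FreeAlgebra.lift_ι_apply, map_zero]
      by_cases hp : p = b
      · rw [hp]
        have hsum : (∑ w ∈ Finset.univ.filter
            (fun w : Vert Γ => w.1 ∈ rankSet rk b.1 1), Mmat F b y z w) = 0 := by
          rw [← Finset.sum_subset
            (show ({y, z} : Finset (Vert Γ)) ⊆ Finset.univ.filter
                (fun w : Vert Γ => w.1 ∈ rankSet rk b.1 1) by
              intro w hw
              rcases Finset.mem_insert.1 hw with rfl | hw
              · exact Finset.mem_filter.2 ⟨Finset.mem_univ _, hy⟩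
              · rw [Finset.mem_singleton.1 hw]
                exact Finset.mem_filter.2 ⟨Finset.mem_univ _, hz⟩)
            (by
              intro w hw hwyz
              have hwy : w ≠ y := fun h => hwyz (by rw [h]; exact Finset.mem_insert_self _ _)
              have hwz : w ≠ z := fun h => hwyz (by
                rw [h]; exact Finset.mem_insert.2 (Or.inr (Finset.mem_singleton_self _)))
              have hwb : w ≠ b := by
                rintro rfl
                have := (Finset.mem_filter.1 hw).2.2
                omega
              exact M0 w hwb hwy hwz)]
          rw [Finset.sum_pair hyz, My, Mz, ← Matrix.single_add]
          norm_num
        rw [hsum, mul_zero]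
      · rw [Finset.mul_sum]
        by_cases hpy : p = y
        · rw [hpy, My]
          exact Finset.sum_eq_zero fun w _ => E12_mul_M F 1
        by_cases hpz : p = z
        · rw [hpz, Mz]
          exact Finset.sum_eq_zero fun w _ => E12_mul_M F (-1)
        · rw [M0 p hp hpy hpz]
          exact Finset.sum_eq_zero fun w _ => zero_mul _
  -- push the identity through the induced algebra map
  have happ := congrArg (RingQuot.liftAlgHom F ⟨FreeAlgebra.lift F (Mmat F b y z), hrel⟩) hann
  rw [map_mul, map_zero, rbar, RingQuot.liftAlgHom_mkAlgHom_apply,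
    RingQuot.liftAlgHom_mkAlgHom_apply, gen, FreeAlgebra.lift_ι_apply] at happ
  have hyA : y.1 ∈ rankSet rk x.1 (k + 1) := rankSet_one_subset hb hy
  have hzA : z.1 ∈ rankSet rk x.1 (k + 1) := rankSet_one_subset hb hz
  have hsum : (FreeAlgebra.lift F (Mmat F b y z))
      (∑ w ∈ Finset.univ.filter (fun w : Vert Γ => w.1 ∈ rankSet rk x.1 (k + 1)),
        α w • gen F w) = Matrix.single 1 2 (α y - α z) := by
    rw [map_sum]
    simp only [map_smul, gen, FreeAlgebra.lift_ι_apply]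
    rw [← Finset.sum_subset
      (show ({y, z} : Finset (Vert Γ)) ⊆ Finset.univ.filter
          (fun w : Vert Γ => w.1 ∈ rankSet rk x.1 (k + 1)) by
        intro w hw
        rcases Finset.mem_insert.1 hw with rfl | hw
        · exact Finset.mem_filter.2 ⟨Finset.mem_univ _, hyA⟩
        · rw [Finset.mem_singleton.1 hw]
          exact Finset.mem_filter.2 ⟨Finset.mem_univ _, hzA⟩)
      (by
        intro w hw hwyz
        have hwy : w ≠ y := fun h => hwyz (by rw [h]; exact Finset.mem_insert_self _ _)
        have hwz : w ≠ z := fun h => hwyz (by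
          rw [h]; exact Finset.mem_insert.2 (Or.inr (Finset.mem_singleton_self _)))
        have hwb : w ≠ b := by
          rintro rfl
          have h1 := (Finset.mem_filter.1 hw).2.2
          have h2 := hb.2
          omega
        rw [M0 w hwb hwy hwz, smul_zero])]
    rw [Finset.sum_pair hyz, My, Mz,
      Matrix.smul_single, Matrix.smul_single, ← Matrix.single_add]
    simp only [smul_eq_mul]
    ring_nf
  rw [hsum, Mb, Matrix.single_mul_single_same] at happ
  have hentry := congrFun (congrFun happ 0) 2
  rw [Matrix.single_apply_same] at hentry
  have hfin : α y - α z = 0 := by simpa using hentry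
  exact sub_eq_zero.mp hfin

/-- from the proof of Theorem 3.4.  Let `Γ` be a uniform ranked
poset, `R = R(Γ)`, `x ∈ Γ'` and `0 ≤ k < rk x`.  Suppose
`p = Σ_{y ∈ S_x(k+1)} α_y r_y ∈ W` satisfies `r_b · p = 0` in `R` for every
`b ∈ S_x(k)`.  Then all the coefficients `α_y` are equal; that is, `p` is a scalar
multiple of `r_x(k+1)`. -/
theorem coefficients_equal (rk : Γ → ℕ) (hrk : IsRanked rk) (hU : Uniform rk)
    (x : Vert Γ) (k : ℕ) (hk : k < rk x.1) (α : Vert Γ → F)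
    (hann : ∀ b : Vert Γ, b.1 ∈ rankSet rk x.1 k →
      rbar F rk b *
        RingQuot.mkAlgHom F (GRel F rk)
          (∑ y ∈ Finset.univ.filter (fun y : Vert Γ => y.1 ∈ rankSet rk x.1 (k + 1)),
            α y • gen F y) = 0) :
    ∃ c : F, ∀ y : Vert Γ, y.1 ∈ rankSet rk x.1 (k + 1) → α y = c := by
  by_cases hex : ∃ y0 : Vert Γ, y0.1 ∈ rankSet rk x.1 (k + 1)
  · obtain ⟨y0, hy0⟩ := hex
    refine ⟨α y0, fun y hy => ?_⟩
    have hk2 : k + 2 ≤ rk x.1 := by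
      have h1 := one_le_rk hrk y0.2
      have h2 := hy0.2
      omega
    set β : Γ → F := fun w => if h : w = ⊥ then 0 else α ⟨w, h⟩ with hβ
    have step : ∀ u v : Γ, chainRel rk x.1 k u v → β u = β v := by
      rintro u v ⟨b, hb, hub, hvb⟩
      have hbne : b ≠ ⊥ := ne_bot_of_one_le_rk hrk (by have h1 := hb.2; omega)
      have hune : u ≠ ⊥ := ne_bot_of_one_le_rk hrk
        (by have h1 := hub.2; have h2 := hb.2; omega)
      have hvne : v ≠ ⊥ := ne_bot_of_one_le_rk hrk
        (by have h1 := hvb.2; have h2 := hb.2; omega)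
      have hcore := coeff_eq_on_cover F rk α ⟨b, hbne⟩ ⟨u, hune⟩ ⟨v, hvne⟩ hub hvb x k hb
        (hann ⟨b, hbne⟩ hb)
      simpa [hβ, hune, hvne] using hcore
    have all : ∀ u v : Γ, Relation.EqvGen (chainRel rk x.1 k) u v → β u = β v := by
      intro u v h
      induction h with
      | rel u v h => exact step u v h
      | refl u => rfl
      | symm u v _ ih => exact ih.symm
      | trans u v w _ _ ih1 ih2 => exact ih1.trans ih2
    have heq := all _ _ (eqvGen_chainRel hrk hU k x.1 y.1 y0.1 hy hy0)
    simpa [hβ, y.2, y0.2] using heq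
  · exact ⟨0, fun y hy => absurd ⟨y, hy⟩ hex⟩
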